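/- Fix γ > 0, p ∈ (0,1), an integer n ≥ 2, and let P_1 = 1/(1 + 2^{−γ}) and P_2 = 2^{−γ}/(1 + 2^{−γ}) (the Zipf distribution with parameter γ on 2 files). Let a = 2^{γ/(n−1)} and define g(b) = P_1 (1 − (1 − b p)^n) + P_2 (1 − (1 − (1−b) p)^n) for b ∈ [0,1]. If n < 1 + γ/log₂(1/(1−p)), then b = 1 maximizes g on [0,1]; otherwise b* = (a − 1 + p)/((a + 1) p) lies in [0,1] and maximizes g on [0,1]. -/

import Mathlib

private theorem tangent_pow (m : ℕ) (x y : ℝ) (hx : 0 ≤ x) (hy : 0 < y) :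
    y^(m+1) + (m+1) * y^m * (x - y) ≤ x^(m+1) := by
  have ht : -1 ≤ (x - y)/y := by
    rw [le_div_iff₀ hy]; linarith
  have hB : 1 + ((m+1):ℕ) * ((x-y)/y) ≤ (1 + (x-y)/y)^(m+1) :=
    one_add_mul_le_pow (by linarith : (-2:ℝ) ≤ (x-y)/y) (m+1)
  have h1 : (1 + (x-y)/y) = x / y := by field_simp; ring
  have h2 : y^(m+1) * (1 + ((m+1):ℕ) * ((x-y)/y)) ≤ y^(m+1) * (x/y)^(m+1) := by
    rw [← h1]; exact mul_le_mul_of_nonneg_left hB (le_of_lt (pow_pos hy (m+1)))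
  have h3 : y^(m+1) * (x/y)^(m+1) = x^(m+1) := by
    rw [div_pow, mul_div_cancel₀ _ (ne_of_gt (pow_pos hy (m+1)))]
  have h4 : y^(m+1) * (1 + ((m+1):ℕ) * ((x-y)/y)) = y^(m+1) + (m+1) * y^m * (x - y) := by
    push_cast
    field_simp
    ring
  rw [h3, h4] at h2
  exact h2

private theorem key_cmp (p : ℝ) (hp0 : 0 < p) (hp1 : p < 1) (m : ℕ) (P1 P2 c b : ℝ)
    (hP1 : 0 ≤ P1) (hP2 : 0 ≤ P2)
    (hc0 : 0 ≤ c) (hc1 : c ≤ 1) (hb0 : 0 ≤ b) (hb1 : b ≤ 1)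
    (hfoc : 0 ≤ (P1 * (1 - c*p)^m - P2 * (1 - (1-c)*p)^m) * (c - b)) :
    P1 * (1 - (1 - b*p)^(m+1)) + P2 * (1 - (1 - (1-b)*p)^(m+1)) ≤
    P1 * (1 - (1 - c*p)^(m+1)) + P2 * (1 - (1 - (1-c)*p)^(m+1)) := by
  have hy1 : (0:ℝ) < 1 - c*p := by nlinarith
  have hy2 : (0:ℝ) < 1 - (1-c)*p := by nlinarith
  have hx1 : (0:ℝ) ≤ 1 - b*p := by nlinarith
  have hx2 : (0:ℝ) ≤ 1 - (1-b)*p := by nlinarith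
  have T1 := tangent_pow m (1 - b*p) (1 - c*p) hx1 hy1
  have T2 := tangent_pow m (1 - (1-b)*p) (1 - (1-c)*p) hx2 hy2
  have T1' := mul_le_mul_of_nonneg_left T1 hP1
  have T2' := mul_le_mul_of_nonneg_left T2 hP2
  have hm : (0:ℝ) ≤ (m+1) * p := by positivity
  have := mul_le_mul_of_nonneg_left hfoc hm
  nlinarith [T1', T2', this]

private theorem exp_ineq (p γ : ℝ) (hp1 : p < 1) (m : ℕ)
    (h : (m:ℝ) * Real.logb 2 (1/(1-p)) < γ) : (2:ℝ)^(-γ) < (1-p)^m := by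
  have h1p : (0:ℝ) < 1 - p := by linarith
  have hlog2 : (0:ℝ) < Real.log 2 := Real.log_pos (by norm_num)
  have hL : Real.logb 2 (1/(1-p)) = -Real.log (1-p) / Real.log 2 := by
    rw [Real.logb, Real.log_div one_ne_zero (ne_of_gt h1p), Real.log_one]
    ring
  rw [hL] at h
  have h2 : -γ * Real.log 2 < (m:ℝ) * Real.log (1-p) := by
    have h' : (m:ℝ) * (-Real.log (1-p)) / Real.log 2 < γ := by
      rw [mul_div_assoc]; exact h
    have := (div_lt_iff₀ hlog2).mp h'
    linarith
  have e1 : (2:ℝ)^(-γ) = Real.exp (-γ * Real.log 2) := by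
    rw [Real.rpow_def_of_pos (by norm_num)]; ring_nf
  have e2 : (1-p)^m = Real.exp ((m:ℝ) * Real.log (1-p)) := by
    rw [← Real.log_pow, Real.exp_log (pow_pos h1p m)]
  rw [e1, e2]
  exact Real.exp_lt_exp.mpr h2

/-- Optimal caching for a 2-file Zipf library (`K = 2`, `L = 1`)
under policy 1: if `n < 1 + γ / log₂(1/(1−p))` then caching only the most
popular file (`b = 1`) is optimal; otherwise `b* = (a − 1 + p)/((a + 1) p)`
with `a = 2^{γ/(n−1)}` lies in `[0,1]` and is optimal. -/
theorem two_file_optimal_cache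
    (γ p : ℝ) (hγ : 0 < γ) (hp : p ∈ Set.Ioo (0 : ℝ) 1) (n : ℕ) (hn : 2 ≤ n)
    (P1 P2 a : ℝ)
    (hP1 : P1 = 1 / (1 + (2 : ℝ) ^ (-γ)))
    (hP2 : P2 = (2 : ℝ) ^ (-γ) / (1 + (2 : ℝ) ^ (-γ)))
    (ha : a = (2 : ℝ) ^ (γ / ((n : ℝ) - 1)))
    (g : ℝ → ℝ)
    (hg : g = fun b => P1 * (1 - (1 - b * p) ^ n) + P2 * (1 - (1 - (1 - b) * p) ^ n)) :
    (((n : ℝ) < 1 + γ / Real.logb 2 (1 / (1 - p))) →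
        ∀ b ∈ Set.Icc (0 : ℝ) 1, g b ≤ g 1) ∧
    (¬ ((n : ℝ) < 1 + γ / Real.logb 2 (1 / (1 - p))) →
        (a - 1 + p) / ((a + 1) * p) ∈ Set.Icc (0 : ℝ) 1 ∧
        ∀ b ∈ Set.Icc (0 : ℝ) 1, g b ≤ g ((a - 1 + p) / ((a + 1) * p))) := by
  obtain ⟨hp0, hp1⟩ := hp
  obtain ⟨m, rfl⟩ : ∃ m, n = m + 1 := ⟨n - 1, by omega⟩
  have hm1 : 1 ≤ m := by omega
  have hm0 : (0:ℝ) < (m:ℝ) := by exact_mod_cast Nat.pos_of_ne_zero (by omega)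
  have hmn : ((m+1 : ℕ):ℝ) - 1 = (m:ℝ) := by push_cast; ring
  have h2γ : (0:ℝ) < (2:ℝ)^(-γ) := Real.rpow_pos_of_pos (by norm_num) _
  have hD : (0:ℝ) < 1 + (2:ℝ)^(-γ) := by linarith
  have hP1pos : 0 < P1 := by rw [hP1]; positivity
  have hP2pos : 0 < P2 := by rw [hP2]; positivity
  have h1p : (0:ℝ) < 1 - p := by linarith
  have hlogpos : 0 < Real.logb 2 (1/(1-p)) := by
    apply Real.logb_pos (by norm_num)
    rw [lt_div_iff₀ h1p]; linarith
  -- a facts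
  have ha' : a = (2:ℝ) ^ (γ / (m:ℝ)) := by rw [ha, hmn]
  have ha1 : 1 < a := by
    rw [ha']
    exact (Real.one_lt_rpow_iff_of_pos (by norm_num)).mpr (Or.inl ⟨by norm_num, div_pos hγ hm0⟩)
  have ham : a ^ m = (2:ℝ) ^ γ := by
    rw [ha', ← Real.rpow_natCast ((2:ℝ) ^ (γ / (m:ℝ))) m,
      ← Real.rpow_mul (by norm_num)]
    congr 1
    field_simp
  have hP2a : P2 * a ^ m = P1 := by
    rw [hP2, hP1, ham, div_mul_eq_mul_div, ← Real.rpow_add (by norm_num)]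
    norm_num
  constructor
  · -- case 1 : b = 1 optimal
    intro hlt b hb
    obtain ⟨hb0, hb1⟩ := hb
    have hcond : ((m:ℝ)) * Real.logb 2 (1/(1-p)) < γ := by
      have h1 : (m:ℝ) < γ / Real.logb 2 (1/(1-p)) := by push_cast at hlt; linarith
      exact (lt_div_iff₀ hlogpos).mp h1
    have hexp : (2:ℝ)^(-γ) < (1-p)^m := exp_ineq p γ hp1 m hcond
    have hbr : 0 ≤ P1 * (1 - 1*p)^m - P2 * (1 - (1-1)*p)^m := by
      have : P1 * (1-p)^m - P2 ≥ 0 := by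
        rw [hP1, hP2]
        rw [ge_iff_le, sub_nonneg, div_mul_eq_mul_div, div_le_div_iff₀ hD hD]
        nlinarith
      simpa using this
    have hfoc : 0 ≤ (P1 * (1 - 1*p)^m - P2 * (1 - (1-1)*p)^m) * (1 - b) :=
      mul_nonneg hbr (by linarith)
    have := key_cmp p hp0 hp1 m P1 P2 1 b (le_of_lt hP1pos) (le_of_lt hP2pos)
      (by norm_num) (by norm_num) hb0 hb1 hfoc
    rw [hg]
    simpa using this
  · -- case 2 : interior optimum
    intro hge
    push_neg at hge
    set c : ℝ := (a - 1 + p) / ((a + 1) * p) with hcdef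
    have hden : (0:ℝ) < (a + 1) * p := by positivity
    have hc0 : 0 ≤ c := by
      apply div_nonneg _ (le_of_lt hden); linarith
    have hcond : γ / (m:ℝ) ≤ Real.logb 2 (1/(1-p)) := by
      have h1 : γ / Real.logb 2 (1/(1-p)) ≤ (m:ℝ) := by push_cast at hge; linarith
      rw [div_le_iff₀ hlogpos] at h1
      rw [div_le_iff₀ hm0]
      linarith
    have haub : a ≤ 1/(1-p) := by
      rw [ha']
      calc (2:ℝ) ^ (γ / (m:ℝ)) ≤ (2:ℝ) ^ Real.logb 2 (1/(1-p)) := by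
            exact Real.rpow_le_rpow_of_exponent_le (by norm_num) hcond
        _ = 1/(1-p) := Real.rpow_logb (by norm_num) (by norm_num) (by positivity)
    have hc1 : c ≤ 1 := by
      rw [hcdef, div_le_one hden]
      have : a * (1-p) ≤ 1 := (le_div_iff₀ h1p).mp haub
      nlinarith
    have hane : a + 1 ≠ 0 := by linarith
    have e1 : 1 - c * p = (2 - p)/(a+1) := by
      rw [hcdef]; field_simp; ring
    have e2 : 1 - (1 - c) * p = a * ((2 - p)/(a+1)) := by
      rw [hcdef]; field_simp; ring
    have hfoceq : P1 * (1 - c*p)^m = P2 * (1 - (1-c)*p)^m := by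
      rw [e1, e2, mul_pow, ← mul_assoc, mul_comm P2 (a^m), mul_assoc, ← mul_assoc,
        mul_comm (a^m) P2, hP2a]
    refine ⟨⟨hc0, hc1⟩, ?_⟩
    intro b hb
    obtain ⟨hb0, hb1⟩ := hb
    have hfoc : 0 ≤ (P1 * (1 - c*p)^m - P2 * (1 - (1-c)*p)^m) * (c - b) := by
      rw [hfoceq]; simp
    have := key_cmp p hp0 hp1 m P1 P2 c b (le_of_lt hP1pos) (le_of_lt hP2pos)
      hc0 hc1 hb0 hb1 hfoc
    rw [hg]
    simpa using this
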